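/- arXiv:1810.01341 — 2 statements merged into one kernel-verified Lean document; each statement's English description precedes it below -/
import Mathlib

section
/- Let a, b, c be positive integers with 4 | c, b odd, and gcd(a,c) = 1. Then the generalized quadratic Gauss sum G(a,b,c) := Σ_{n mod c} e^{2πi(an²+bn)/c} vanishes. -/
open Complex Finset

/-- The generalized quadratic Gauss sum `G(a,b,c) := Σ_{n=0}^{c-1} e^{2πi(an²+bn)/c}`. -/
noncomputable def gaussSum' (a b c : ℕ) : ℂ :=
  ∑ n ∈ Finset.range c,
    Complex.exp (2 * Real.pi * Complex.I * ((a : ℂ) * n ^ 2 + (b : ℂ) * n) / (c : ℂ))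

theorem gaussSum_eq_zero_of_four_dvd_of_odd (a b c : ℕ) (ha : 0 < a) (hb : 0 < b) (hc : 0 < c)
    (h4 : 4 ∣ c) (hbodd : Odd b) (hgcd : Nat.gcd a c = 1) :
    gaussSum' a b c = 0 := by
  obtain ⟨k, hk⟩ := h4
  obtain ⟨j, hj⟩ := hbodd
  have hk0 : 0 < k := by omega
  set m := 2 * k with hm
  have hc2 : c = m + m := by omega
  have hkC : (k : ℂ) ≠ 0 := by exact_mod_cast hk0.ne'
  have hc4 : (c : ℂ) = 4 * (k : ℂ) := by exact_mod_cast congrArg (Nat.cast : ℕ → ℂ) hk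
  have key : ∀ n : ℕ,
      Complex.exp (2 * Real.pi * Complex.I * ((a : ℂ) * (↑(m + n)) ^ 2 + (b : ℂ) * (↑(m + n))) / (c : ℂ))
      = - Complex.exp (2 * Real.pi * Complex.I * ((a : ℂ) * (n : ℂ) ^ 2 + (b : ℂ) * (n : ℂ)) / (c : ℂ)) := by
    intro n
    have hsplit : 2 * (Real.pi : ℂ) * Complex.I * ((a : ℂ) * (↑(m + n)) ^ 2 + (b : ℂ) * (↑(m + n))) / (c : ℂ)
        = 2 * (Real.pi : ℂ) * Complex.I * ((a : ℂ) * (n : ℂ) ^ 2 + (b : ℂ) * (n : ℂ)) / (c : ℂ)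
          + ((↑(a * k + a * n + j) : ℂ) * (2 * Real.pi * Complex.I) + Real.pi * Complex.I) := by
      rw [hc4, hj, hm]
      push_cast
      field_simp
      ring
    rw [hsplit, Complex.exp_add, Complex.exp_add,
      Complex.exp_nat_mul_two_pi_mul_I, Complex.exp_pi_mul_I]
    ring
  rw [gaussSum', hc2, Finset.sum_range_add, ← hc2]
  rw [Finset.sum_congr rfl (fun n _ => key n)]
  simp
end

section
/- Let m > 0, a₂ ≥ 0, a₁ > 0 be real numbers and let f₂(v) := (√D·a₂/a₁)·n₂² ∫_v^∞ (e^{-π(a₂n₂)²ω₁/a₁}/√ω₁) ∫_{ω₁}^∞ (e^{-πDn₂²ω₂/a₁}/√ω₂) dω₂ dω₁ where D = 4a₁a₃ - a₂² > 0 and n₂ ≠ 0 real. Then f₂'(v) = -(a₂|n₂|/√(a₁vπ)) e^{-π(a₂n₂)²v/a₁} Γ(1/2, m²πvn₂²), where m = √(4a₃ - a₂²/a₁). -/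
open MeasureTheory Real

open Set Filter

lemma integral_Ioi_split {h : ℝ → ℝ} {a b : ℝ} (hab : a ≤ b)
    (hint : IntegrableOn h (Ioi a)) :
    ∫ t in Ioi a, h t = (∫ t in Ioc a b, h t) + ∫ t in Ioi b, h t := by
  rw [← setIntegral_union (Ioc_disjoint_Ioi le_rfl) measurableSet_Ioi
    (hint.mono_set Ioc_subset_Ioi_self) (hint.mono_set (Ioi_subset_Ioi hab)),
    Ioc_union_Ioi_eq_Ioi hab]

lemma hasDerivAt_integral_Ioi {h : ℝ → ℝ} {v : ℝ} (hv : 0 < v)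
    (hint : IntegrableOn h (Ioi (v / 2)))
    (hcont : ContinuousAt h v) :
    HasDerivAt (fun x => ∫ t in Ioi x, h t) (-h v) v := by
  have hmem : Ioi (v / 2) ∈ nhds v := Ioi_mem_nhds (by linarith)
  have hmeas : StronglyMeasurableAtFilter h (nhds v) :=
    ⟨Ioi (v / 2), hmem, hint.aestronglyMeasurable⟩
  have hd : HasDerivAt (fun x => (∫ t in x..v, h t) + ∫ t in Ioi v, h t) (-h v) v :=
    (intervalIntegral.integral_hasDerivAt_left (IntervalIntegrable.refl) hmeas hcont).add_const _
  refine hd.congr_of_eventuallyEq ?_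
  filter_upwards [hmem] with x hx
  rcases le_or_gt x v with hxv | hxv
  · rw [intervalIntegral.integral_of_le hxv,
      integral_Ioi_split hxv (hint.mono_set (Ioi_subset_Ioi hx.le))]
  · rw [intervalIntegral.integral_symm, intervalIntegral.integral_of_le hxv.le,
      integral_Ioi_split hxv.le (hint.mono_set (Ioi_subset_Ioi (by linarith [mem_Ioi.mp hx])))]
    ring

lemma integrableOn_exp_mul_div_sqrt {c s : ℝ} (hc : 0 < c) (hs : 0 < s) :
    IntegrableOn (fun ω => Real.exp (-c * ω) / Real.sqrt ω) (Ioi s) := by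
  refine Integrable.mono' ((exp_neg_integrableOn_Ioi s hc).const_mul (Real.sqrt s)⁻¹) ?_ ?_
  · refine ContinuousOn.aestronglyMeasurable ?_ measurableSet_Ioi
    refine ContinuousOn.div (by fun_prop) (Real.continuous_sqrt.continuousOn) ?_
    intro x hx
    exact (Real.sqrt_pos.mpr (hs.trans hx)).ne'
  · filter_upwards [ae_restrict_mem measurableSet_Ioi] with x hx
    have hxs : s ≤ x := (mem_Ioi.mp hx).le
    have h1 : (0:ℝ) < Real.sqrt s := Real.sqrt_pos.mpr hs
    rw [Real.norm_eq_abs, abs_of_nonneg (by positivity)]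
    rw [div_le_iff₀ (Real.sqrt_pos.mpr (hs.trans_le hxs)), mul_comm ((Real.sqrt s)⁻¹), mul_assoc]
    refine le_mul_of_one_le_right (Real.exp_pos _).le ?_
    rw [← div_eq_inv_mul, one_le_div h1]
    exact Real.sqrt_le_sqrt hxs

lemma integral_exp_div_sqrt_Ioi {c v : ℝ} (hc : 0 < c) (hv : 0 < v) :
    ∫ ω in Ioi v, Real.exp (-c * ω) / Real.sqrt ω
      = Real.sqrt c / c * ∫ t in Ioi (c * v), Real.exp (-t) * t ^ ((1/2 : ℝ) - 1) := by
  have h1 : ∀ ω ∈ Ioi v, Real.exp (-c * ω) / Real.sqrt ω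
      = Real.sqrt c * (Real.exp (-(c * ω)) * (c * ω) ^ ((1/2 : ℝ) - 1)) := by
    intro ω hω
    have hω0 : 0 < ω := hv.trans hω
    have hcω : 0 < c * ω := mul_pos hc hω0
    rw [show ((1:ℝ)/2 - 1) = -(1/2) by norm_num, Real.rpow_neg hcω.le, ← Real.sqrt_eq_rpow,
      Real.sqrt_mul hc.le]
    have h2 : (0:ℝ) < Real.sqrt c := Real.sqrt_pos.mpr hc
    have h3 : (0:ℝ) < Real.sqrt ω := Real.sqrt_pos.mpr hω0
    rw [neg_mul]
    field_simp
  rw [setIntegral_congr_fun measurableSet_Ioi h1, integral_const_mul,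
    integral_comp_mul_left_Ioi (fun t => Real.exp (-t) * t ^ ((1/2 : ℝ) - 1)) v hc,
    smul_eq_mul]
  ring

/-- The upper incomplete gamma function `Γ(a,x) = ∫ₓ^∞ e^{-t} t^{a-1} dt`. -/
noncomputable def upperIncGamma (a x : ℝ) : ℝ :=
  ∫ t in Set.Ioi x, Real.exp (-t) * t ^ (a - 1)

theorem deriv_f2 (a₁ a₂ a₃ n₂ : ℝ) (ha₁ : 0 < a₁) (ha₂ : 0 ≤ a₂) (ha₃ : 0 < a₃)
    (hD : 0 < 4 * a₁ * a₃ - a₂ ^ 2) (hn₂ : n₂ ≠ 0) (v : ℝ) (hv : 0 < v) :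
    HasDerivAt (fun v : ℝ =>
        (Real.sqrt (4 * a₁ * a₃ - a₂ ^ 2) * a₂ / a₁) * n₂ ^ 2 *
          ∫ ω₁ in Set.Ioi v,
            (Real.exp (-Real.pi * (a₂ * n₂) ^ 2 * ω₁ / a₁) / Real.sqrt ω₁) *
              ∫ ω₂ in Set.Ioi ω₁,
                Real.exp (-Real.pi * (4 * a₁ * a₃ - a₂ ^ 2) * n₂ ^ 2 * ω₂ / a₁) / Real.sqrt ω₂)
      (-(a₂ * |n₂| / Real.sqrt (a₁ * v * Real.pi)) *
          Real.exp (-Real.pi * (a₂ * n₂) ^ 2 * v / a₁) *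
          upperIncGamma (1/2) (Real.sqrt (4 * a₃ - a₂ ^ 2 / a₁) ^ 2 * Real.pi * v * n₂ ^ 2))
      v := by
  rcases eq_or_lt_of_le ha₂ with h0 | ha₂'
  · simp only [← h0, mul_zero, zero_mul, zero_div, abs_zero, neg_zero]
    simpa using hasDerivAt_const v (0:ℝ)
  -- notation
  set D : ℝ := 4 * a₁ * a₃ - a₂ ^ 2 with hD_def
  set c : ℝ := Real.pi * D * n₂ ^ 2 / a₁ with hc_def
  set k : ℝ := Real.pi * (a₂ * n₂) ^ 2 / a₁ with hk_def
  have hn2sq : (0:ℝ) < n₂ ^ 2 := by positivity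
  have hc : 0 < c := by rw [hc_def]; positivity
  have hk : 0 < k := by rw [hk_def]; positivity
  set h₂ : ℝ → ℝ := fun ω₂ => Real.exp (-Real.pi * D * n₂ ^ 2 * ω₂ / a₁) / Real.sqrt ω₂
    with hh₂_def
  have hh₂eq : ∀ ω : ℝ, h₂ ω = Real.exp (-c * ω) / Real.sqrt ω := by
    intro ω
    simp only [hh₂_def]
    rw [show -Real.pi * D * n₂ ^ 2 * ω / a₁ = -c * ω by rw [hc_def]; field_simp]
  have h₂int : ∀ s, 0 < s → IntegrableOn h₂ (Ioi s) := by
    intro s hs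
    have := integrableOn_exp_mul_div_sqrt hc hs
    exact this.congr_fun (fun x _ => (hh₂eq x).symm) measurableSet_Ioi
  have h₂cont : ∀ ω, 0 < ω → ContinuousAt h₂ ω := by
    intro ω hω
    exact ContinuousAt.div (by fun_prop) Real.continuous_sqrt.continuousAt
      (Real.sqrt_pos.mpr hω).ne'
  set I : ℝ → ℝ := fun x => ∫ t in Ioi x, h₂ t with hI_def
  have Ideriv : ∀ ω, 0 < ω → HasDerivAt I (-h₂ ω) ω := fun ω hω =>
    hasDerivAt_integral_Ioi hω (h₂int _ (by linarith)) (h₂cont ω hω)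
  have Inonneg : ∀ x, 0 ≤ I x := by
    intro x
    refine setIntegral_nonneg measurableSet_Ioi fun t _ => ?_
    rw [hh₂eq]
    positivity
  have Imono : ∀ s x, 0 < s → s ≤ x → I x ≤ I s := by
    intro s x hs hsx
    exact setIntegral_mono_set (h₂int s hs)
      (Filter.Eventually.of_forall fun t => by rw [hh₂eq]; positivity)
      ((Ioi_subset_Ioi hsx).eventuallyLE)
  set g : ℝ → ℝ := fun ω₁ => (Real.exp (-Real.pi * (a₂ * n₂) ^ 2 * ω₁ / a₁) / Real.sqrt ω₁) * I ω₁
    with hg_def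
  have hEx : ∀ ω : ℝ, -Real.pi * (a₂ * n₂) ^ 2 * ω / a₁ = -k * ω := by
    intro ω; rw [hk_def]; field_simp
  have hvh : 0 < v / 2 := by linarith
  have hgint : IntegrableOn g (Ioi (v / 2)) := by
    refine Integrable.mono'
      ((exp_neg_integrableOn_Ioi (v/2) hk).const_mul ((Real.sqrt (v/2))⁻¹ * I (v/2))) ?_ ?_
    · refine ContinuousOn.aestronglyMeasurable ?_ measurableSet_Ioi
      refine ContinuousOn.mul (ContinuousOn.div (by fun_prop)
        Real.continuous_sqrt.continuousOn fun x hx => (Real.sqrt_pos.mpr (hvh.trans hx)).ne') ?_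
      exact fun x hx => ((Ideriv x (hvh.trans hx)).continuousAt).continuousWithinAt
    · filter_upwards [ae_restrict_mem measurableSet_Ioi] with x hx
      have hx0 : 0 < x := hvh.trans hx
      have h1 : (0:ℝ) < Real.sqrt (v/2) := Real.sqrt_pos.mpr hvh
      have h2 : (0:ℝ) < Real.sqrt x := Real.sqrt_pos.mpr hx0
      rw [hg_def, Real.norm_eq_abs, abs_of_nonneg (mul_nonneg (by positivity) (Inonneg x))]
      rw [hEx x]
      calc Real.exp (-k * x) / Real.sqrt x * I x
          ≤ Real.exp (-k * x) / Real.sqrt (v/2) * I (v/2) := by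
            gcongr
            · exact le_of_lt (mem_Ioi.mp hx)
            · exact Imono _ _ hvh (le_of_lt (mem_Ioi.mp hx))
        _ = (Real.sqrt (v/2))⁻¹ * I (v/2) * Real.exp (-k * x) := by ring
  have hgcont : ContinuousAt g v := by
    refine ContinuousAt.mul (ContinuousAt.div (by fun_prop)
      Real.continuous_sqrt.continuousAt (Real.sqrt_pos.mpr hv).ne') ?_
    exact (Ideriv v hv).continuousAt
  have hmain := (hasDerivAt_integral_Ioi hv hgint hgcont).const_mul
    (Real.sqrt D * a₂ / a₁ * n₂ ^ 2)
  -- compute the value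
  have hIv : I v = Real.sqrt c / c * upperIncGamma (1/2) (c * v) := by
    rw [hI_def]
    simp only [hh₂eq]
    exact integral_exp_div_sqrt_Ioi hc hv
  have hGarg : Real.sqrt (4 * a₃ - a₂ ^ 2 / a₁) ^ 2 * Real.pi * v * n₂ ^ 2 = c * v := by
    have h1 : (0:ℝ) ≤ 4 * a₃ - a₂ ^ 2 / a₁ := by
      rw [sub_nonneg, div_le_iff₀ ha₁]; nlinarith
    rw [Real.sq_sqrt h1, hc_def, hD_def]
    field_simp
  -- scalar identity
  have hP : (0:ℝ) < Real.sqrt Real.pi := Real.sqrt_pos.mpr Real.pi_pos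
  have hA : (0:ℝ) < Real.sqrt a₁ := Real.sqrt_pos.mpr ha₁
  have hV : (0:ℝ) < Real.sqrt v := Real.sqrt_pos.mpr hv
  have hDD : (0:ℝ) < Real.sqrt D := Real.sqrt_pos.mpr hD
  have hN : (0:ℝ) < |n₂| := abs_pos.mpr hn₂
  have e1 : Real.sqrt (a₁ * v * Real.pi) = Real.sqrt a₁ * Real.sqrt v * Real.sqrt Real.pi := by
    rw [Real.sqrt_mul (mul_pos ha₁ hv).le, Real.sqrt_mul ha₁.le]
  have hc2 : c = (Real.sqrt Real.pi * Real.sqrt D * |n₂| / Real.sqrt a₁) ^ 2 := by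
    rw [div_pow, mul_pow, mul_pow, Real.sq_sqrt Real.pi_pos.le, Real.sq_sqrt hD.le,
      Real.sq_sqrt ha₁.le, sq_abs, hc_def]
  have e2 : Real.sqrt c = Real.sqrt Real.pi * Real.sqrt D * |n₂| / Real.sqrt a₁ := by
    rw [hc2, Real.sqrt_sq (by positivity)]
  have ea : Real.sqrt a₁ * Real.sqrt a₁ = a₁ := Real.mul_self_sqrt ha₁.le
  have en : n₂ ^ 2 = |n₂| ^ 2 := (sq_abs n₂).symm
  have hS : a₂ * |n₂| / Real.sqrt (a₁ * v * Real.pi)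
      = Real.sqrt D * a₂ / a₁ * n₂ ^ 2 / Real.sqrt v * (Real.sqrt c / c) := by
    rw [e1, e2, hc2, en, ← ea]
    field_simp
    rw [Real.sqrt_sq hA.le]
  have hval : -(a₂ * |n₂| / Real.sqrt (a₁ * v * Real.pi)) *
      Real.exp (-Real.pi * (a₂ * n₂) ^ 2 * v / a₁) *
      upperIncGamma (1/2) (Real.sqrt (4 * a₃ - a₂ ^ 2 / a₁) ^ 2 * Real.pi * v * n₂ ^ 2)
      = Real.sqrt D * a₂ / a₁ * n₂ ^ 2 * -g v := by
    rw [hGarg, hS, hg_def]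
    simp only [hIv]
    ring
  rw [hval]
  exact hmain
end
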